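/- arXiv:2505.07156 — 2 statements merged into one kernel-verified Lean document; each statement's English description precedes it below -/
import Mathlib

section
/- In the saddle-point setting, with M_U = [[F, Bᵀ],[0, H2]] and H = blockdiag(H1, H2), the inverse of the preconditioned matrix satisfies ‖(M_U⁻¹K)⁻¹‖_H ≤ 2 + (2C₁² + C₁ + 1)(1 + η)²/C₂². -/
open Matrix

/-- The `H`-norm of a vector: `‖u‖_H = (uᵀ H u)^{1/2}`. -/
noncomputable def vnorm {α : Type*} [Fintype α] (H : Matrix α α ℝ) (u : α → ℝ) : ℝ :=
  Real.sqrt (u ⬝ᵥ (H *ᵥ u))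

/-- The weighted operator norm `‖M‖_{H1,H2} = sup_{v ≠ 0} ‖M v‖_{H2} / ‖v‖_{H1}`.
For a square matrix, `‖M‖_H = wnorm H H M`; the spectral norm is `wnorm 1 1 M`. -/
noncomputable def wnorm {α β : Type*} [Fintype α] [Fintype β]
    (H1 : Matrix α α ℝ) (H2 : Matrix β β ℝ) (M : Matrix β α ℝ) : ℝ :=
  sSup {r : ℝ | ∃ v : α → ℝ, v ≠ 0 ∧ r = vnorm H2 (M *ᵥ v) / vnorm H1 v}

section Helpers

variable {α : Type*} [Fintype α] {β : Type*} [Fintype β]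

lemma psd_nonneg {P : Matrix α α ℝ} (hP : P.PosSemidef) (v : α → ℝ) :
    0 ≤ v ⬝ᵥ (P *ᵥ v) := hP.dotProduct_mulVec_nonneg v

lemma pd_pos {P : Matrix α α ℝ} (hP : P.PosDef) {v : α → ℝ} (hv : v ≠ 0) :
    0 < v ⬝ᵥ (P *ᵥ v) := hP.dotProduct_mulVec_pos hv

lemma dot_transpose {γ : Type*} [Fintype γ] (M : Matrix α γ ℝ) (v : γ → ℝ) (w : α → ℝ) :
    v ⬝ᵥ (Mᵀ *ᵥ w) = w ⬝ᵥ (M *ᵥ v) := by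
  rw [dotProduct_mulVec, vecMul_transpose, dotProduct_comm]

lemma dot_symm {P : Matrix α α ℝ} (hP : Pᵀ = P) (v w : α → ℝ) :
    v ⬝ᵥ (P *ᵥ w) = w ⬝ᵥ (P *ᵥ v) := by
  conv_lhs => rw [← hP]
  rw [dot_transpose]

lemma herm_transpose {P : Matrix α α ℝ} (hP : P.IsHermitian) : Pᵀ = P := by
  have := hP.eq
  rwa [conjTranspose_eq_transpose_of_trivial] at this

lemma cs_sq {P : Matrix α α ℝ} (hP : P.PosSemidef) (v w : α → ℝ) :
    (v ⬝ᵥ (P *ᵥ w))^2 ≤ (v ⬝ᵥ (P *ᵥ v)) * (w ⬝ᵥ (P *ᵥ w)) := by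
  have hsym := dot_symm (herm_transpose hP.1) w v
  have key : ∀ t : ℝ, 0 ≤ (w ⬝ᵥ (P *ᵥ w)) * (t * t) + (2 * (v ⬝ᵥ (P *ᵥ w))) * t
      + (v ⬝ᵥ (P *ᵥ v)) := by
    intro t
    have h0 := psd_nonneg hP (v + t • w)
    simp only [mulVec_add, mulVec_smul, dotProduct_add, add_dotProduct, dotProduct_smul,
      smul_dotProduct, smul_eq_mul] at h0
    rw [hsym] at h0
    ring_nf at h0 ⊢
    linarith
  have hd := discrim_le_zero key
  rw [discrim] at hd
  nlinarith [hd]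

lemma vnorm_nonneg (P : Matrix α α ℝ) (v : α → ℝ) : 0 ≤ vnorm P v := Real.sqrt_nonneg _

lemma vnorm_sq {P : Matrix α α ℝ} (hP : P.PosSemidef) (v : α → ℝ) :
    vnorm P v ^ 2 = v ⬝ᵥ (P *ᵥ v) := Real.sq_sqrt (psd_nonneg hP v)

lemma vnorm_pos {P : Matrix α α ℝ} (hP : P.PosDef) {v : α → ℝ} (hv : v ≠ 0) :
    0 < vnorm P v := Real.sqrt_pos.mpr (pd_pos hP hv)

lemma dot_le_vnorm_mul {P : Matrix α α ℝ} (hP : P.PosSemidef) (v w : α → ℝ) :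
    v ⬝ᵥ (P *ᵥ w) ≤ vnorm P v * vnorm P w := by
  have h1 := cs_sq hP v w
  calc v ⬝ᵥ (P *ᵥ w) ≤ |v ⬝ᵥ (P *ᵥ w)| := le_abs_self _
    _ = Real.sqrt ((v ⬝ᵥ (P *ᵥ w))^2) := (Real.sqrt_sq_eq_abs _).symm
    _ ≤ Real.sqrt ((v ⬝ᵥ (P *ᵥ v)) * (w ⬝ᵥ (P *ᵥ w))) := Real.sqrt_le_sqrt h1
    _ = vnorm P v * vnorm P w := Real.sqrt_mul (psd_nonneg hP v) _

lemma vnorm_add_le {P : Matrix α α ℝ} (hP : P.PosSemidef) (v w : α → ℝ) :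
    vnorm P (v + w) ≤ vnorm P v + vnorm P w := by
  have h1 := dot_le_vnorm_mul hP v w
  have h2 := dot_le_vnorm_mul hP w v
  have h3 := vnorm_sq hP v
  have h4 := vnorm_sq hP w
  have h5 : (v + w) ⬝ᵥ (P *ᵥ (v + w)) ≤ (vnorm P v + vnorm P w)^2 := by
    simp only [mulVec_add, dotProduct_add, add_dotProduct]
    nlinarith
  calc vnorm P (v + w) = Real.sqrt ((v + w) ⬝ᵥ (P *ᵥ (v + w))) := rfl
    _ ≤ Real.sqrt ((vnorm P v + vnorm P w)^2) := Real.sqrt_le_sqrt h5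
    _ = vnorm P v + vnorm P w :=
        Real.sqrt_sq (add_nonneg (vnorm_nonneg _ _) (vnorm_nonneg _ _))

lemma vnorm_neg (P : Matrix α α ℝ) (v : α → ℝ) : vnorm P (-v) = vnorm P v := by
  simp [vnorm, mulVec_neg, dotProduct_neg, neg_dotProduct]

lemma vnorm_sub_le {P : Matrix α α ℝ} (hP : P.PosSemidef) (v w : α → ℝ) :
    vnorm P (v - w) ≤ vnorm P v + vnorm P w := by
  rw [sub_eq_add_neg]
  simpa [vnorm_neg] using vnorm_add_le hP v (-w)

lemma sq_le_dot (w : α → ℝ) (i : α) : w i * w i ≤ w ⬝ᵥ w := by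
  unfold dotProduct
  exact Finset.single_le_sum (f := fun j => w j * w j)
    (fun j _ => mul_self_nonneg _) (Finset.mem_univ i)

lemma qform_le (R : Matrix α α ℝ) (w : α → ℝ) :
    w ⬝ᵥ (R *ᵥ w) ≤ (∑ i, ∑ j, |R i j|) * (w ⬝ᵥ w) := by
  have hterm : ∀ i j : α, w i * (R i j * w j) ≤ |R i j| * (w ⬝ᵥ w) := by
    intro i j
    have h1 : w i * (R i j * w j) ≤ |R i j| * (|w i| * |w j|) := by
      calc w i * (R i j * w j) ≤ |w i * (R i j * w j)| := le_abs_self _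
        _ = |R i j| * (|w i| * |w j|) := by rw [abs_mul, abs_mul]; ring
    have h2 : |w i| * |w j| ≤ w ⬝ᵥ w := by
      have hi := sq_le_dot w i
      have hj := sq_le_dot w j
      nlinarith [abs_nonneg (w i), abs_nonneg (w j), sq_abs (w i), sq_abs (w j),
        abs_mul_abs_self (w i), abs_mul_abs_self (w j)]
    calc w i * (R i j * w j) ≤ |R i j| * (|w i| * |w j|) := h1
      _ ≤ |R i j| * (w ⬝ᵥ w) := by
          exact mul_le_mul_of_nonneg_left h2 (abs_nonneg _)
  calc w ⬝ᵥ (R *ᵥ w) = ∑ i, ∑ j, w i * (R i j * w j) := by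
        simp [dotProduct, mulVec, Finset.mul_sum]
    _ ≤ ∑ i, ∑ j, |R i j| * (w ⬝ᵥ w) := by
        refine Finset.sum_le_sum fun i _ => Finset.sum_le_sum fun j _ => hterm i j
    _ = (∑ i, ∑ j, |R i j|) * (w ⬝ᵥ w) := by rw [Finset.sum_mul]; simp [Finset.sum_mul]

lemma vnorm_le_sqrtsum (Q : Matrix α α ℝ) (w : α → ℝ) :
    vnorm Q w ≤ Real.sqrt (∑ i, ∑ j, |Q i j|) * Real.sqrt (w ⬝ᵥ w) := by
  rw [vnorm, ← Real.sqrt_mul (by positivity)]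
  exact Real.sqrt_le_sqrt (qform_le Q w)

variable [DecidableEq α]

lemma vnorm_inv_mulVec {P : Matrix α α ℝ} (hP : P.PosDef) (v : α → ℝ) :
    vnorm P⁻¹ (P *ᵥ v) = vnorm P v := by
  unfold vnorm
  congr 1
  rw [mulVec_mulVec, nonsing_inv_mul P hP.det_pos.ne'.isUnit, one_mulVec, dotProduct_comm]

lemma vnorm_mulVec_inv {P : Matrix α α ℝ} (hP : P.PosDef) (c : α → ℝ) :
    vnorm P (P⁻¹ *ᵥ c) = vnorm P⁻¹ c := by
  unfold vnorm
  congr 1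
  rw [mulVec_mulVec, mul_nonsing_inv P hP.det_pos.ne'.isUnit, one_mulVec, dotProduct_comm]

lemma dot_le_pair {P : Matrix α α ℝ} (hP : P.PosDef) (v c : α → ℝ) :
    v ⬝ᵥ c ≤ vnorm P v * vnorm P⁻¹ c := by
  have hc : P *ᵥ (P⁻¹ *ᵥ c) = c := by
    rw [mulVec_mulVec, mul_nonsing_inv P hP.det_pos.ne'.isUnit, one_mulVec]
  calc v ⬝ᵥ c = v ⬝ᵥ (P *ᵥ (P⁻¹ *ᵥ c)) := by rw [hc]
    _ ≤ vnorm P v * vnorm P (P⁻¹ *ᵥ c) := dot_le_vnorm_mul hP.posSemidef _ _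
    _ = vnorm P v * vnorm P⁻¹ c := by rw [vnorm_mulVec_inv hP]

lemma euclid_le_vnorm {P : Matrix α α ℝ} (hP : P.PosDef) (v : α → ℝ) :
    Real.sqrt (v ⬝ᵥ v) ≤ Real.sqrt (∑ i, ∑ j, |P⁻¹ i j|) * vnorm P v := by
  set c := Real.sqrt (∑ i, ∑ j, |P⁻¹ i j|) with hc
  set e := Real.sqrt (v ⬝ᵥ v) with he
  have hvv : (0:ℝ) ≤ v ⬝ᵥ v := Finset.sum_nonneg fun i _ => mul_self_nonneg _
  have he2 : e * e = v ⬝ᵥ v := Real.mul_self_sqrt hvv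
  have h1 : v ⬝ᵥ v ≤ vnorm P v * (c * e) := by
    calc v ⬝ᵥ v ≤ vnorm P v * vnorm P⁻¹ v := dot_le_pair hP v v
      _ ≤ vnorm P v * (c * e) := by
          exact mul_le_mul_of_nonneg_left (vnorm_le_sqrtsum P⁻¹ v) (vnorm_nonneg _ _)
  rcases eq_or_lt_of_le (Real.sqrt_nonneg (v ⬝ᵥ v)) with h | h
  · rw [← he] at h
    rw [← h]
    exact mul_nonneg (Real.sqrt_nonneg _) (vnorm_nonneg _ _)
  · rw [← he] at h
    have hcnn : 0 ≤ c := Real.sqrt_nonneg _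
    nlinarith [vnorm_nonneg P v]

lemma wnorm_bdd {P : Matrix α α ℝ} (hP : P.PosDef) (Q : Matrix β β ℝ) (M : Matrix β α ℝ) :
    BddAbove {r : ℝ | ∃ v : α → ℝ, v ≠ 0 ∧ r = vnorm Q (M *ᵥ v) / vnorm P v} := by
  set cQ := Real.sqrt (∑ i, ∑ j, |Q i j|) with hcQ
  set cM := Real.sqrt (∑ i, ∑ j, |(Mᵀ * M) i j|) with hcM
  set cP := Real.sqrt (∑ i, ∑ j, |P⁻¹ i j|) with hcP
  refine ⟨cQ * cM * cP, ?_⟩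
  rintro r ⟨v, hv, rfl⟩
  have hpos : 0 < vnorm P v := vnorm_pos hP hv
  rw [div_le_iff₀ hpos]
  have hMv : (M *ᵥ v) ⬝ᵥ (M *ᵥ v) = v ⬝ᵥ ((Mᵀ * M) *ᵥ v) := by
    rw [← mulVec_mulVec, dot_transpose]
  have h1 : vnorm Q (M *ᵥ v) ≤ cQ * Real.sqrt ((M *ᵥ v) ⬝ᵥ (M *ᵥ v)) :=
    vnorm_le_sqrtsum Q (M *ᵥ v)
  have h2 : Real.sqrt ((M *ᵥ v) ⬝ᵥ (M *ᵥ v)) ≤ cM * Real.sqrt (v ⬝ᵥ v) := by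
    rw [hMv, ← Real.sqrt_mul (by positivity)]
    calc Real.sqrt (v ⬝ᵥ (Mᵀ * M) *ᵥ v)
        ≤ Real.sqrt ((∑ i, ∑ j, |(Mᵀ * M) i j|) * (v ⬝ᵥ v)) :=
          Real.sqrt_le_sqrt (qform_le (Mᵀ * M) v)
      _ = _ := by rw [Real.sqrt_mul (by positivity)]
  have h3 : Real.sqrt (v ⬝ᵥ v) ≤ cP * vnorm P v := euclid_le_vnorm hP v
  have hcQ0 : 0 ≤ cQ := Real.sqrt_nonneg _
  have hcM0 : 0 ≤ cM := Real.sqrt_nonneg _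
  calc vnorm Q (M *ᵥ v) ≤ cQ * Real.sqrt ((M *ᵥ v) ⬝ᵥ (M *ᵥ v)) := h1
    _ ≤ cQ * (cM * Real.sqrt (v ⬝ᵥ v)) := by
        exact mul_le_mul_of_nonneg_left h2 hcQ0
    _ ≤ cQ * (cM * (cP * vnorm P v)) := by
        refine mul_le_mul_of_nonneg_left (mul_le_mul_of_nonneg_left h3 hcM0) hcQ0
    _ = cQ * cM * cP * vnorm P v := by ring

lemma wnorm_apply_le {P : Matrix α α ℝ} (hP : P.PosDef) {Q : Matrix β β ℝ}
    {M : Matrix β α ℝ} {C : ℝ} (hC : 0 ≤ C) (h : wnorm P Q M ≤ C) (v : α → ℝ) :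
    vnorm Q (M *ᵥ v) ≤ C * vnorm P v := by
  by_cases hv : v = 0
  · subst hv
    simp [vnorm, mulVec_zero]
  · have hmem : vnorm Q (M *ᵥ v) / vnorm P v ∈
        {r : ℝ | ∃ v : α → ℝ, v ≠ 0 ∧ r = vnorm Q (M *ᵥ v) / vnorm P v} := ⟨v, hv, rfl⟩
    have h2 : vnorm Q (M *ᵥ v) / vnorm P v ≤ C :=
      le_trans (le_csSup (wnorm_bdd hP Q M) hmem) h
    have hpos : 0 < vnorm P v := vnorm_pos hP hv
    rw [div_le_iff₀ hpos] at h2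
    linarith [h2]


lemma le_of_sq_le_mul {V c : ℝ} (hV : 0 ≤ V) (hc : 0 ≤ c) (h : V ^ 2 ≤ c * V) : V ≤ c := by
  rcases hV.eq_or_lt with h0 | h0
  · rw [← h0]; exact hc
  · have h1 : V * V ≤ c * V := by nlinarith
    exact le_of_mul_le_mul_right h1 h0


lemma final_combine {a b cu cp C1 g T : ℝ} (ha : 0 ≤ a) (hb : 0 ≤ b)
    (hcu : 0 ≤ cu) (hcp : 0 ≤ cp) (hC1 : 0 ≤ C1) (hg : 0 ≤ g)
    (hT : T = 2 + (2 * C1 ^ 2 + C1 + 1) * g)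
    (hu : cu ≤ (1 + C1 ^ 2 * g) * a + (C1 * g) * b)
    (hp : cp ≤ (C1 * g) * a + (1 + g) * b) :
    cu ^ 2 + cp ^ 2 ≤ T ^ 2 * (a ^ 2 + b ^ 2) := by
  have hcoef : (1 + C1 ^ 2 * g) ^ 2 + (C1 * g) ^ 2 + ((C1 * g) ^ 2 + (1 + g) ^ 2) ≤ T ^ 2 := by
    rw [hT]
    nlinarith [hg, hC1, sq_nonneg g, mul_nonneg hg hC1,
      mul_nonneg (mul_nonneg hg hg) (pow_nonneg hC1 4),
      mul_nonneg (mul_nonneg hg hg) (pow_nonneg hC1 3),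
      mul_nonneg (mul_nonneg hg hg) (pow_nonneg hC1 2),
      mul_nonneg (mul_nonneg hg hg) hC1,
      mul_nonneg hg (pow_nonneg hC1 2), mul_nonneg hg hg]
  have hufin : cu ^ 2 ≤ ((1 + C1 ^ 2 * g) * a + (C1 * g) * b) ^ 2 := by nlinarith [hu, hcu]
  have hpfin : cp ^ 2 ≤ ((C1 * g) * a + (1 + g) * b) ^ 2 := by nlinarith [hp, hcp]
  have hmid1 : ((1 + C1 ^ 2 * g) * a + (C1 * g) * b) ^ 2
      ≤ ((1 + C1 ^ 2 * g) ^ 2 + (C1 * g) ^ 2) * (a ^ 2 + b ^ 2) := by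
    nlinarith [sq_nonneg ((1 + C1 ^ 2 * g) * b - (C1 * g) * a)]
  have hmid2 : ((C1 * g) * a + (1 + g) * b) ^ 2
      ≤ ((C1 * g) ^ 2 + (1 + g) ^ 2) * (a ^ 2 + b ^ 2) := by
    nlinarith [sq_nonneg ((C1 * g) * b - (1 + g) * a)]
  have hsq2 : 0 ≤ a ^ 2 + b ^ 2 := by positivity
  nlinarith [hufin, hpfin, hmid1, hmid2, mul_le_mul_of_nonneg_right hcoef hsq2]

end Helpers

set_option maxHeartbeats 1000000 in
theorem stmt_6
    {n m : ℕ} (F : Matrix (Fin n) (Fin n) ℝ) (B : Matrix (Fin m) (Fin n) ℝ)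
    (H1 N : Matrix (Fin n) (Fin n) ℝ) (H2 : Matrix (Fin m) (Fin m) ℝ)
    (η C₁ C₂ : ℝ) (hη : 0 < η) (hC1 : 0 < C₁) (hC2 : 0 < C₂)
    (hH1 : H1 = ((1 : ℝ)/2) • (F + Fᵀ)) (hN : N = ((1 : ℝ)/2) • (F - Fᵀ))
    (hH1pd : H1.PosDef) (hH2pd : H2.PosDef)
    (hBrank : B.rank = m)
    (hNnorm : wnorm H1 H1⁻¹ N ≤ η)
    (hBnorm : wnorm H1 H2⁻¹ B ≤ C₁)
    (hinfsup : ∀ x : Fin m → ℝ, x ≠ 0 → C₂ * vnorm H2 x ≤ vnorm H1⁻¹ (Bᵀ *ᵥ x))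
    (K MU H : Matrix (Fin n ⊕ Fin m) (Fin n ⊕ Fin m) ℝ)
    (hK : K = fromBlocks F Bᵀ B 0)
    (hMU : MU = fromBlocks F Bᵀ 0 H2)
    (hH : H = fromBlocks H1 0 0 H2) :
    wnorm H H (MU⁻¹ * K)⁻¹ ≤ 2 + (2 * C₁ ^ 2 + C₁ + 1) * (1 + η) ^ 2 / C₂ ^ 2 := by
  have hH1psd := hH1pd.posSemidef
  have hH2psd := hH2pd.posSemidef
  have hH1ipd := hH1pd.inv
  have hH2ipd := hH2pd.inv
  -- quadratic form of F equals that of H1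
  have dotF : ∀ z : Fin n → ℝ, z ⬝ᵥ (F *ᵥ z) = z ⬝ᵥ (H1 *ᵥ z) := by
    intro z
    have ht := dot_transpose F z z
    rw [hH1, smul_mulVec, dotProduct_smul, add_mulVec, dotProduct_add, ht]
    simp only [smul_eq_mul]
    ring
  have hFH : F = H1 + N := by
    rw [hH1, hN]
    ext i j
    simp only [Matrix.add_apply, Matrix.sub_apply, Matrix.smul_apply, smul_eq_mul]
    ring
  -- determinants
  have hFdet : F.det ≠ 0 := by
    intro h
    obtain ⟨v, hv, hFv⟩ := Matrix.exists_mulVec_eq_zero_iff.mpr h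
    have hpos := pd_pos hH1pd hv
    rw [← dotF, hFv, dotProduct_zero] at hpos
    exact lt_irrefl _ hpos
  have hH2det : H2.det ≠ 0 := hH2pd.det_pos.ne'
  have hMUdet : MU.det ≠ 0 := by
    rw [hMU, det_fromBlocks_zero₂₁]
    exact mul_ne_zero hFdet hH2det
  have vnorm_zero : ∀ {κ : Type} [Fintype κ] (P : Matrix κ κ ℝ), vnorm P (0 : κ → ℝ) = 0 := by
    intro κ _ P
    simp [vnorm]
  have hKdet : K.det ≠ 0 := by
    intro h
    obtain ⟨w, hw, hKw⟩ := Matrix.exists_mulVec_eq_zero_iff.mpr h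
    rw [hK, fromBlocks_mulVec] at hKw
    have h1 : F *ᵥ (w ∘ Sum.inl) + Bᵀ *ᵥ (w ∘ Sum.inr) = 0 := by
      funext i
      simpa using congrFun hKw (Sum.inl i)
    have h2 : B *ᵥ (w ∘ Sum.inl) = 0 := by
      funext i
      simpa using congrFun hKw (Sum.inr i)
    have h3 : (w ∘ Sum.inl) ⬝ᵥ (H1 *ᵥ (w ∘ Sum.inl)) = 0 := by
      have h4 := congrArg (fun c => (w ∘ Sum.inl) ⬝ᵥ c) h1
      simp only [dotProduct_add, dotProduct_zero] at h4
      rw [dot_transpose B (w ∘ Sum.inl) (w ∘ Sum.inr), h2, dotProduct_zero, add_zero, dotF] at h4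
      exact h4
    have hu : w ∘ Sum.inl = 0 := by
      by_contra hu0
      exact (pd_pos hH1pd hu0).ne' h3
    have hBp : Bᵀ *ᵥ (w ∘ Sum.inr) = 0 := by
      rw [hu, mulVec_zero, zero_add] at h1
      exact h1
    have hp : w ∘ Sum.inr = 0 := by
      by_contra hp0
      have h5 := hinfsup (w ∘ Sum.inr) hp0
      rw [hBp, vnorm_zero] at h5
      have h6 := mul_pos hC2 (vnorm_pos hH2pd hp0)
      linarith
    apply hw
    funext i
    cases i with
    | inl i => exact congrFun hu i
    | inr i => exact congrFun hp i
  -- elementwise operator norm bounds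
  have hNapp := wnorm_apply_le hH1pd hη.le hNnorm
  have hBapp := wnorm_apply_le hH1pd hC1.le hBnorm
  have hBT : ∀ q : Fin m → ℝ, vnorm H1⁻¹ (Bᵀ *ᵥ q) ≤ C₁ * vnorm H2 q := by
    intro q
    have h1 : vnorm H1⁻¹ (Bᵀ *ᵥ q) ^ 2 = (Bᵀ *ᵥ q) ⬝ᵥ (H1⁻¹ *ᵥ (Bᵀ *ᵥ q)) :=
      vnorm_sq hH1ipd.posSemidef _
    have h2 : (Bᵀ *ᵥ q) ⬝ᵥ (H1⁻¹ *ᵥ (Bᵀ *ᵥ q)) = q ⬝ᵥ (B *ᵥ (H1⁻¹ *ᵥ (Bᵀ *ᵥ q))) := by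
      rw [dotProduct_comm, dot_transpose B (H1⁻¹ *ᵥ (Bᵀ *ᵥ q)) q]
    have h3 := dot_le_pair hH2pd q (B *ᵥ (H1⁻¹ *ᵥ (Bᵀ *ᵥ q)))
    have h4 := hBapp (H1⁻¹ *ᵥ (Bᵀ *ᵥ q))
    have h5 : vnorm H1 (H1⁻¹ *ᵥ (Bᵀ *ᵥ q)) = vnorm H1⁻¹ (Bᵀ *ᵥ q) :=
      vnorm_mulVec_inv hH1pd _
    have h6 := vnorm_nonneg H1⁻¹ (Bᵀ *ᵥ q)
    have h7 := vnorm_nonneg H2 q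
    rw [h5] at h4
    refine le_of_sq_le_mul h6 (mul_nonneg hC1.le h7) ?_
    have h8 := mul_le_mul_of_nonneg_left h4 h7
    nlinarith [h1, h2, h3, h8]
  have hFub : ∀ z : Fin n → ℝ, vnorm H1⁻¹ (F *ᵥ z) ≤ (1 + η) * vnorm H1 z := by
    intro z
    have hsum : F *ᵥ z = H1 *ᵥ z + N *ᵥ z := by rw [hFH, add_mulVec]
    rw [hsum]
    have t1 := vnorm_add_le hH1ipd.posSemidef (H1 *ᵥ z) (N *ᵥ z)
    have t2 : vnorm H1⁻¹ (H1 *ᵥ z) = vnorm H1 z := vnorm_inv_mulVec hH1pd z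
    have t3 := hNapp z
    linarith
  -- setup for the main bound
  set γ := (1 + η) ^ 2 / C₂ ^ 2 with hγdef
  have hγ : 0 < γ := by positivity
  have hgoal_eq : (2 + (2 * C₁ ^ 2 + C₁ + 1) * (1 + η) ^ 2 / C₂ ^ 2 : ℝ)
      = 2 + (2 * C₁ ^ 2 + C₁ + 1) * γ := by
    rw [hγdef]; ring
  rw [hgoal_eq]
  set T := 2 + (2 * C₁ ^ 2 + C₁ + 1) * γ with hTdef
  have hT0 : 0 ≤ T := by
    have h0 : 0 ≤ (2 * C₁ ^ 2 + C₁ + 1) * γ :=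
      mul_nonneg (by nlinarith [sq_nonneg C₁]) hγ.le
    linarith
  have hsplit : ∀ s : Fin n ⊕ Fin m → ℝ, s ⬝ᵥ (H *ᵥ s)
      = (s ∘ Sum.inl) ⬝ᵥ (H1 *ᵥ (s ∘ Sum.inl)) + (s ∘ Sum.inr) ⬝ᵥ (H2 *ᵥ (s ∘ Sum.inr)) := by
    intro s
    rw [hH, fromBlocks_mulVec]
    simp [dotProduct, Fintype.sum_sum_type, zero_mulVec]
  apply Real.sSup_le _ hT0
  rintro r ⟨v, hv, rfl⟩
  set A := MU⁻¹ * K with hA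
  have hAdet : IsUnit A.det := by
    rw [hA, det_mul, det_nonsing_inv, Ring.inverse_eq_inv']
    exact (mul_ne_zero (inv_ne_zero hMUdet) hKdet).isUnit
  set w := A⁻¹ *ᵥ v with hwdef
  have hAw : A *ᵥ w = v := by
    rw [hwdef, mulVec_mulVec, mul_nonsing_inv _ hAdet, one_mulVec]
  have hKw : K *ᵥ w = MU *ᵥ v := by
    have h0 : MU *ᵥ (A *ᵥ w) = MU *ᵥ v := by rw [hAw]
    rwa [mulVec_mulVec, hA, ← Matrix.mul_assoc, mul_nonsing_inv MU hMUdet.isUnit,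
      Matrix.one_mul] at h0
  rw [hK, hMU, fromBlocks_mulVec, fromBlocks_mulVec] at hKw
  set u := w ∘ Sum.inl with hudef
  set p := w ∘ Sum.inr with hpdef
  set x := v ∘ Sum.inl with hxdef
  set y := v ∘ Sum.inr with hydef
  have R1 : F *ᵥ u + Bᵀ *ᵥ p = F *ᵥ x + Bᵀ *ᵥ y := by
    funext i
    simpa using congrFun hKw (Sum.inl i)
  have R2 : B *ᵥ u = H2 *ᵥ y := by
    funext i
    simpa using congrFun hKw (Sum.inr i)
  have hvpos : 0 < vnorm H v := by
    apply Real.sqrt_pos.mpr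
    rw [hsplit v]
    by_cases hx0 : x = 0
    · have hy0 : y ≠ 0 := by
        intro h0
        apply hv
        funext i
        cases i with
        | inl i => exact congrFun hx0 i
        | inr i => exact congrFun h0 i
      have q1 := pd_pos hH2pd hy0
      have q2 := psd_nonneg hH1psd x
      linarith
    · have q1 := pd_pos hH1pd hx0
      have q2 := psd_nonneg hH2psd y
      linarith
  rw [div_le_iff₀ hvpos]
  clear_value A w u p x y
  clear hAw hAdet hA hwdef hKw
  set z := x - u with hzdef
  set q := p - y with hqdef
  have hFz : F *ᵥ z = Bᵀ *ᵥ q := by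
    rw [hzdef, hqdef, mulVec_sub, mulVec_sub]
    funext i
    have h0 := congrFun R1 i
    simp only [Pi.add_apply, Pi.sub_apply] at h0 ⊢
    linarith
  have hBz : B *ᵥ z = B *ᵥ x - H2 *ᵥ y := by
    rw [hzdef, mulVec_sub, R2]
  have ha0 := vnorm_nonneg H1 x
  have hb0 := vnorm_nonneg H2 y
  have hz0 := vnorm_nonneg H1 z
  have hq0 := vnorm_nonneg H2 q
  have hz_le : vnorm H1 z ≤ C₁ * vnorm H2 q := by
    have h1 : vnorm H1 z ^ 2 = z ⬝ᵥ (Bᵀ *ᵥ q) := by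
      rw [vnorm_sq hH1psd, ← dotF, hFz]
    have h3 := dot_le_pair hH1pd z (Bᵀ *ᵥ q)
    have h4 := hBT q
    refine le_of_sq_le_mul hz0 (mul_nonneg hC1.le hq0) ?_
    have h5 := mul_le_mul_of_nonneg_left h4 hz0
    nlinarith [h1, h3, h5]
  have hab : 0 ≤ C₁ * vnorm H1 x + vnorm H2 y :=
    add_nonneg (mul_nonneg hC1.le ha0) hb0
  have hq_le : vnorm H2 q ≤ γ * (C₁ * vnorm H1 x + vnorm H2 y) := by
    by_cases hq00 : q = 0
    · rw [hq00, vnorm_zero]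
      exact mul_nonneg hγ.le hab
    · have hlow : C₂ * vnorm H2 q ≤ (1 + η) * vnorm H1 z := by
        have h5 := hinfsup q hq00
        rw [← hFz] at h5
        have h6 := hFub z
        linarith
      have hupper : vnorm H1 z ^ 2 ≤ vnorm H2 q * (C₁ * vnorm H1 x + vnorm H2 y) := by
        have h1 : vnorm H1 z ^ 2 = q ⬝ᵥ (B *ᵥ x - H2 *ᵥ y) := by
          rw [vnorm_sq hH1psd, ← dotF, hFz, dot_transpose B z q, hBz]
        have h4 := dot_le_pair hH2pd q (B *ᵥ x - H2 *ᵥ y)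
        have h5 : vnorm H2⁻¹ (B *ᵥ x - H2 *ᵥ y) ≤ C₁ * vnorm H1 x + vnorm H2 y := by
          have t1 := vnorm_sub_le hH2ipd.posSemidef (B *ᵥ x) (H2 *ᵥ y)
          have t2 := hBapp x
          have t3 : vnorm H2⁻¹ (H2 *ᵥ y) = vnorm H2 y := vnorm_inv_mulVec hH2pd y
          linarith
        have h6 := mul_le_mul_of_nonneg_left h5 hq0
        linarith [h1, h4, h6]
      have hqpos : 0 < vnorm H2 q := vnorm_pos hH2pd hq00
      have hsq : (C₂ * vnorm H2 q) ^ 2 ≤ ((1 + η) * vnorm H1 z) ^ 2 := by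
        nlinarith [hlow, mul_nonneg hC2.le hq0]
      have h7 : vnorm H2 q * C₂ ^ 2 ≤ (1 + η) ^ 2 * (C₁ * vnorm H1 x + vnorm H2 y) := by
        have h8 : (1 + η) ^ 2 * (vnorm H1 z ^ 2)
            ≤ (1 + η) ^ 2 * (vnorm H2 q * (C₁ * vnorm H1 x + vnorm H2 y)) :=
          mul_le_mul_of_nonneg_left hupper (sq_nonneg _)
        have h9 : vnorm H2 q * C₂ ^ 2 * vnorm H2 q
            ≤ (1 + η) ^ 2 * (C₁ * vnorm H1 x + vnorm H2 y) * vnorm H2 q := by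
          nlinarith [hsq, h8]
        exact le_of_mul_le_mul_right h9 hqpos
      rw [hγdef, div_mul_eq_mul_div, le_div_iff₀ (by positivity)]
      linarith [h7]
  have hu_le : vnorm H1 u ≤ (1 + C₁ ^ 2 * γ) * vnorm H1 x + (C₁ * γ) * vnorm H2 y := by
    have hux : u = x - z := by rw [hzdef, sub_sub_cancel]
    rw [hux]
    have t1 := vnorm_sub_le hH1psd x z
    have t2 : vnorm H1 z ≤ C₁ * (γ * (C₁ * vnorm H1 x + vnorm H2 y)) :=
      le_trans hz_le (mul_le_mul_of_nonneg_left hq_le hC1.le)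
    nlinarith [t1, t2]
  have hp_le : vnorm H2 p ≤ (C₁ * γ) * vnorm H1 x + (1 + γ) * vnorm H2 y := by
    have hpy : p = y + q := by rw [hqdef]; funext i; simp
    rw [hpy]
    have t1 := vnorm_add_le hH2psd y q
    nlinarith [t1, hq_le]
  -- final combination
  have hwnorm : vnorm H w = Real.sqrt (vnorm H1 u ^ 2 + vnorm H2 p ^ 2) := by
    rw [vnorm, hsplit w, ← vnorm_sq hH1psd, ← vnorm_sq hH2psd, hudef, hpdef]
  have hvnorm : vnorm H v = Real.sqrt (vnorm H1 x ^ 2 + vnorm H2 y ^ 2) := by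
    rw [vnorm, hsplit v, ← vnorm_sq hH1psd, ← vnorm_sq hH2psd, hxdef, hydef]
  rw [hwnorm, hvnorm]
  have hfin : vnorm H1 u ^ 2 + vnorm H2 p ^ 2
      ≤ T ^ 2 * (vnorm H1 x ^ 2 + vnorm H2 y ^ 2) :=
    final_combine ha0 hb0 (vnorm_nonneg H1 u) (vnorm_nonneg H2 p) hC1.le hγ.le hTdef hu_le hp_le
  calc Real.sqrt (vnorm H1 u ^ 2 + vnorm H2 p ^ 2)
      ≤ Real.sqrt (T ^ 2 * (vnorm H1 x ^ 2 + vnorm H2 y ^ 2)) := Real.sqrt_le_sqrt hfin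
    _ = T * Real.sqrt (vnorm H1 x ^ 2 + vnorm H2 y ^ 2) := by
        rw [Real.sqrt_mul (sq_nonneg T), Real.sqrt_sq hT0]
end

section
/- In the saddle-point setting, ‖H1 F⁻¹ Bᵀ H2⁻¹ B − Bᵀ H2⁻¹ B F⁻ᵀ H1‖_{H1,H1⁻¹} ≤ 2 C₁² η, where F⁻ᵀ denotes the transpose of F⁻¹. -/
open Matrix

noncomputable def en {k : Type*} [Fintype k] (u : k → ℝ) : ℝ := Real.sqrt (u ⬝ᵥ u)

lemma dot_self_nonneg {k : Type*} [Fintype k] (u : k → ℝ) : 0 ≤ u ⬝ᵥ u :=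
  Finset.sum_nonneg fun i _ => mul_self_nonneg _

lemma en_nonneg {k : Type*} [Fintype k] (u : k → ℝ) : 0 ≤ en u := Real.sqrt_nonneg _

lemma en_sq {k : Type*} [Fintype k] (u : k → ℝ) : en u ^ 2 = u ⬝ᵥ u :=
  Real.sq_sqrt (dot_self_nonneg u)

lemma dot_le_en_mul_en {k : Type*} [Fintype k] (u v : k → ℝ) : u ⬝ᵥ v ≤ en u * en v := by
  have h := Real.sum_mul_le_sqrt_mul_sqrt Finset.univ u v
  simpa [en, dotProduct, sq] using h

lemma en_neg {k : Type*} [Fintype k] (u : k → ℝ) : en (-u) = en u := by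
  simp [en, dotProduct]

lemma en_add_le {k : Type*} [Fintype k] (u v : k → ℝ) : en (u + v) ≤ en u + en v := by
  have h1 : (u + v) ⬝ᵥ (u + v) ≤ (en u + en v) ^ 2 := by
    have := dot_le_en_mul_en u v
    have e1 := en_sq u; have e2 := en_sq v
    simp only [add_dotProduct, dotProduct_add]
    have hc : v ⬝ᵥ u = u ⬝ᵥ v := dotProduct_comm v u
    nlinarith [en_nonneg u, en_nonneg v]
  calc en (u + v) ≤ Real.sqrt ((en u + en v) ^ 2) := Real.sqrt_le_sqrt h1
    _ = en u + en v := Real.sqrt_sq (by have := en_nonneg u; have := en_nonneg v; linarith)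

lemma exists_bound {m n : ℕ} (A : Matrix (Fin m) (Fin n) ℝ) :
    ∃ K, 0 ≤ K ∧ ∀ x, en (A *ᵥ x) ≤ K * en x := by
  refine ⟨Real.sqrt (∑ i, ∑ j, (A i j) ^ 2), Real.sqrt_nonneg _, fun x => ?_⟩
  have h : (A *ᵥ x) ⬝ᵥ (A *ᵥ x) ≤ (∑ i, ∑ j, (A i j) ^ 2) * (x ⬝ᵥ x) := by
    have : ∀ i : Fin m, (A *ᵥ x) i * (A *ᵥ x) i ≤ (∑ j, (A i j) ^ 2) * (x ⬝ᵥ x) := by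
      intro i
      have := Finset.sum_mul_sq_le_sq_mul_sq Finset.univ (fun j => A i j) x
      simpa [mulVec, dotProduct, sq] using this
    calc (A *ᵥ x) ⬝ᵥ (A *ᵥ x) = ∑ i, (A *ᵥ x) i * (A *ᵥ x) i := rfl
      _ ≤ ∑ i, (∑ j, (A i j) ^ 2) * (x ⬝ᵥ x) := Finset.sum_le_sum fun i _ => this i
      _ = (∑ i, ∑ j, (A i j) ^ 2) * (x ⬝ᵥ x) := by rw [Finset.sum_mul]
  calc en (A *ᵥ x) ≤ Real.sqrt ((∑ i, ∑ j, (A i j) ^ 2) * (x ⬝ᵥ x)) := Real.sqrt_le_sqrt h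
    _ = _ := Real.sqrt_mul (by positivity) _


lemma skew_dot {k : Type*} [Fintype k] {A : Matrix k k ℝ} (hA : Aᵀ = -A) (z : k → ℝ) :
    z ⬝ᵥ (A *ᵥ z) = 0 := by
  have h1 : z ⬝ᵥ (A *ᵥ z) = (Aᵀ *ᵥ z) ⬝ᵥ z := by
    rw [dotProduct_mulVec, ← mulVec_transpose]
  rw [hA, neg_mulVec, neg_dotProduct] at h1
  have h2 := dotProduct_comm (A *ᵥ z) z
  linarith

lemma en_contraction {k : Type*} [Fintype k] [DecidableEq k] {Z A : Matrix k k ℝ} (hZ : Zᵀ = -Z)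
    (h : (1 + Z) * A = 1) (w : k → ℝ) : en (A *ᵥ w) ≤ en w := by
  set u := A *ᵥ w with hu
  have hw : w = u + Z *ᵥ u := by
    have h2 : (1 + Z) *ᵥ u = w := by rw [hu, mulVec_mulVec, h, one_mulVec]
    rw [← h2, add_mulVec, one_mulVec]
  have hz : u ⬝ᵥ (Z *ᵥ u) = 0 := skew_dot hZ u
  have hc : (Z *ᵥ u) ⬝ᵥ u = 0 := by rw [dotProduct_comm]; exact hz
  have hle : u ⬝ᵥ u ≤ w ⬝ᵥ w := by
    conv_rhs => rw [hw]
    simp only [dotProduct_add, add_dotProduct, hz, hc, add_zero, zero_add]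
    linarith [dot_self_nonneg (Z *ᵥ u)]
  exact Real.sqrt_le_sqrt hle


lemma cancel_left {α β : Type*} [Fintype α] [Fintype β] [DecidableEq α] {A B : Matrix α α ℝ}
    (h : A * B = 1) (X : Matrix α β ℝ) : A * (B * X) = X := by
  rw [← Matrix.mul_assoc, h, Matrix.one_mul]


-- vnorm of factored matrix
lemma vnorm_factor {k : Type*} [Fintype k] {S : Matrix k k ℝ} (hS : Sᵀ = S) (u : k → ℝ) :
    vnorm (S * S) u = en (S *ᵥ u) := by
  unfold vnorm en
  congr 1
  rw [← mulVec_mulVec, dotProduct_mulVec]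
  have h2 : u ᵥ* S = S *ᵥ u := by
    conv_lhs => rw [← hS]
    rw [vecMul_transpose]
  rw [h2]

lemma pd_dot {k : Type*} [Fintype k] {H : Matrix k k ℝ} (hH : H.PosDef) {x : k → ℝ}
    (hx : x ≠ 0) : 0 < x ⬝ᵥ (H *ᵥ x) := by
  have := hH.dotProduct_mulVec_pos hx
  simpa using this

lemma vnorm_pos_s9 {k : Type*} [Fintype k] {H : Matrix k k ℝ} (hH : H.PosDef) {x : k → ℝ}
    (hx : x ≠ 0) : 0 < vnorm H x := Real.sqrt_pos.2 (pd_dot hH hx)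

lemma wnorm_le_of_forall {α β : Type*} [Fintype α] [Fintype β]
    {H1 : Matrix α α ℝ} {H2 : Matrix β β ℝ} {M : Matrix β α ℝ} {c : ℝ}
    (hH1 : H1.PosDef) (hc : 0 ≤ c)
    (h : ∀ v, vnorm H2 (M *ᵥ v) ≤ c * vnorm H1 v) : wnorm H1 H2 M ≤ c := by
  apply Real.sSup_le _ hc
  rintro r ⟨v, hv, rfl⟩
  rw [div_le_iff₀ (vnorm_pos_s9 hH1 hv)]
  exact h v

lemma exists_sqrt {k : ℕ} {H : Matrix (Fin k) (Fin k) ℝ} (hH : H.PosDef) :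
    ∃ S : Matrix (Fin k) (Fin k) ℝ, Sᵀ = S ∧ S * S = H ∧ IsUnit S.det := by
  open scoped MatrixOrder in
  refine ⟨CFC.sqrt H, ?_, CFC.sqrt_mul_sqrt_self H hH.posSemidef.nonneg, ?_⟩
  · open scoped MatrixOrder in
    have := (CFC.sqrt_nonneg H).posSemidef.isHermitian
    rwa [Matrix.IsHermitian, conjTranspose_eq_transpose_of_trivial] at this
  · open scoped MatrixOrder in
    have hd : (CFC.sqrt H).det * (CFC.sqrt H).det = H.det := by
          rw [← det_mul, CFC.sqrt_mul_sqrt_self H hH.posSemidef.nonneg]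
    have : H.det ≠ 0 := hH.det_pos.ne'
    exact isUnit_iff_ne_zero.2 (left_ne_zero_of_mul (hd ▸ this))

lemma en_bound_of_wnorm_le {n m : ℕ} {H1 : Matrix (Fin n) (Fin n) ℝ}
    {H2 : Matrix (Fin m) (Fin m) ℝ} {M : Matrix (Fin m) (Fin n) ℝ} {c : ℝ}
    (hH1 : H1.PosDef) (hH2 : H2.PosDef) (hc : 0 ≤ c)
    (h : wnorm H1 H2 M ≤ c) : ∀ v, vnorm H2 (M *ᵥ v) ≤ c * vnorm H1 v := by
  obtain ⟨S1, hS1s, hS1m, hS1d⟩ := exists_sqrt hH1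
  obtain ⟨S2, hS2s, hS2m, hS2d⟩ := exists_sqrt hH2
  obtain ⟨K, hK0, hK⟩ := exists_bound (S2 * M * S1⁻¹)
  have hv2 : ∀ x, vnorm H2 x = en (S2 *ᵥ x) := fun x => by rw [← hS2m, vnorm_factor hS2s]
  have hv1 : ∀ x, vnorm H1 x = en (S1 *ᵥ x) := fun x => by rw [← hS1m, vnorm_factor hS1s]
  have key : ∀ v, vnorm H2 (M *ᵥ v) ≤ K * vnorm H1 v := by
    intro v
    rw [hv2, hv1]
    have e : S2 *ᵥ (M *ᵥ v) = (S2 * M * S1⁻¹) *ᵥ (S1 *ᵥ v) := by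
      rw [mulVec_mulVec, mulVec_mulVec, Matrix.mul_assoc (S2 * M),
        nonsing_inv_mul _ hS1d, Matrix.mul_one]
    rw [e]
    exact hK _
  intro v
  by_cases hv : v = 0
  · subst hv; simp [vnorm]
  · have hmem : vnorm H2 (M *ᵥ v) / vnorm H1 v ∈
        {r : ℝ | ∃ v : Fin n → ℝ, v ≠ 0 ∧ r = vnorm H2 (M *ᵥ v) / vnorm H1 v} := ⟨v, hv, rfl⟩
    have hbdd : BddAbove {r : ℝ | ∃ v : Fin n → ℝ, v ≠ 0 ∧ r = vnorm H2 (M *ᵥ v) / vnorm H1 v} := by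
      refine ⟨K, ?_⟩
      rintro r ⟨w, hw, rfl⟩
      rw [div_le_iff₀ (vnorm_pos_s9 hH1 hw)]
      exact key w
    have := le_csSup hbdd hmem
    have h2 : vnorm H2 (M *ᵥ v) / vnorm H1 v ≤ c := le_trans this h
    rwa [div_le_iff₀ (vnorm_pos_s9 hH1 hv)] at h2

set_option maxHeartbeats 1600000 in
theorem stmt_9
    {n m : ℕ} (F : Matrix (Fin n) (Fin n) ℝ) (B : Matrix (Fin m) (Fin n) ℝ)
    (H1 N : Matrix (Fin n) (Fin n) ℝ) (H2 : Matrix (Fin m) (Fin m) ℝ)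
    (η C₁ C₂ : ℝ) (hη : 0 < η) (hC1 : 0 < C₁) (hC2 : 0 < C₂)
    (hH1 : H1 = ((1 : ℝ)/2) • (F + Fᵀ)) (hN : N = ((1 : ℝ)/2) • (F - Fᵀ))
    (hH1pd : H1.PosDef) (hH2pd : H2.PosDef)
    (hBrank : B.rank = m)
    (hNnorm : wnorm H1 H1⁻¹ N ≤ η)
    (hBnorm : wnorm H1 H2⁻¹ B ≤ C₁)
    (hinfsup : ∀ x : Fin m → ℝ, x ≠ 0 → C₂ * vnorm H2 x ≤ vnorm H1⁻¹ (Bᵀ *ᵥ x)) :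
    wnorm H1 H1⁻¹ (H1 * F⁻¹ * Bᵀ * H2⁻¹ * B - Bᵀ * H2⁻¹ * B * (F⁻¹)ᵀ * H1) ≤
      2 * C₁ ^ 2 * η := by
  -- basic symmetry facts
  have hNs : Nᵀ = -N := by rw [hN]; simp [transpose_smul, transpose_sub]; module
  have hF : H1 + N = F := by rw [hH1, hN]; module
  have hFT : H1 - N = Fᵀ := by rw [hH1, hN]; module
  -- square roots
  obtain ⟨S, hSs, hSm, hSd⟩ := exists_sqrt hH1pd
  obtain ⟨R, hRs, hRm, hRd⟩ := exists_sqrt hH2pd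
  have hSi : S⁻¹ * S = 1 := nonsing_inv_mul S hSd
  have hSi' : S * S⁻¹ = 1 := mul_nonsing_inv S hSd
  have hRi : R⁻¹ * R = 1 := nonsing_inv_mul R hRd
  have hRi' : R * R⁻¹ = 1 := mul_nonsing_inv R hRd
  have hSit : (S⁻¹)ᵀ = S⁻¹ := by rw [transpose_nonsing_inv, hSs]
  have hRit : (R⁻¹)ᵀ = R⁻¹ := by rw [transpose_nonsing_inv, hRs]
  -- F is invertible
  have hFd : IsUnit F.det := by
    rw [← isUnit_iff_isUnit_det]
    rw [← Matrix.mulVec_injective_iff_isUnit]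
    intro x y hxy
    by_contra hne
    have hz : x - y ≠ 0 := sub_ne_zero.2 hne
    have h0 : F *ᵥ (x - y) = 0 := by rw [mulVec_sub, hxy, sub_self]
    have hd : (x - y) ⬝ᵥ (F *ᵥ (x - y)) = 0 := by rw [h0, dotProduct_zero]
    rw [← hF, add_mulVec, dotProduct_add, skew_dot hNs, add_zero] at hd
    exact absurd hd (pd_dot hH1pd hz).ne'
  have hFi : F * F⁻¹ = 1 := mul_nonsing_inv F hFd
  have hFi' : F⁻¹ * F = 1 := nonsing_inv_mul F hFd
  have hFti : Fᵀ * (F⁻¹)ᵀ = 1 := by rw [← transpose_mul, hFi', transpose_one]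
  -- inverse factorizations
  have hH1inv : H1⁻¹ = S⁻¹ * S⁻¹ := by rw [← hSm, Matrix.mul_inv_rev]
  have hH2inv : H2⁻¹ = R⁻¹ * R⁻¹ := by rw [← hRm, Matrix.mul_inv_rev]
  have hv1 : ∀ x, vnorm H1 x = en (S *ᵥ x) := fun x => by rw [← hSm, vnorm_factor hSs]
  have hv1i : ∀ x, vnorm H1⁻¹ x = en (S⁻¹ *ᵥ x) := fun x => by
    rw [hH1inv, vnorm_factor hSit]
  have hv2i : ∀ x, vnorm H2⁻¹ x = en (R⁻¹ *ᵥ x) := fun x => by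
    rw [hH2inv, vnorm_factor hRit]
  -- transformed matrices
  set Nt := S⁻¹ * N * S⁻¹ with hNt_def
  set Bt := R⁻¹ * B * S⁻¹ with hBt_def
  set G := S * F⁻¹ * S with hG_def
  have hNtskew : Ntᵀ = -Nt := by
    rw [hNt_def]
    simp [transpose_mul, hSit, hNs, Matrix.mul_assoc]
  -- pointwise bounds
  have hNpt : ∀ w, en (Nt *ᵥ w) ≤ η * en w := by
    intro w
    have h := en_bound_of_wnorm_le hH1pd hH1pd.inv hη.le hNnorm (S⁻¹ *ᵥ w)
    rw [hv1i, hv1] at h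
    rw [mulVec_mulVec, mulVec_mulVec] at h
    rwa [mulVec_mulVec, hSi', one_mulVec] at h
  have hBpt : ∀ w, en (Bt *ᵥ w) ≤ C₁ * en w := by
    intro w
    have h := en_bound_of_wnorm_le hH1pd hH2pd.inv hC1.le hBnorm (S⁻¹ *ᵥ w)
    rw [hv2i, hv1] at h
    rw [mulVec_mulVec, mulVec_mulVec] at h
    rwa [mulVec_mulVec, hSi', one_mulVec] at h
  have hBtT : ∀ u, en (Btᵀ *ᵥ u) ≤ C₁ * en u := by
    intro u
    set x := Btᵀ *ᵥ u with hx
    have h1 : x ⬝ᵥ x = u ⬝ᵥ (Bt *ᵥ x) := by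
      rw [dotProduct_mulVec u Bt x]
      congr 1
      rw [hx, mulVec_transpose]
    have h2 : u ⬝ᵥ (Bt *ᵥ x) ≤ en u * (C₁ * en x) := by
      calc u ⬝ᵥ (Bt *ᵥ x) ≤ en u * en (Bt *ᵥ x) := dot_le_en_mul_en _ _
        _ ≤ en u * (C₁ * en x) := by
            exact mul_le_mul_of_nonneg_left (hBpt x) (en_nonneg u)
    have h3 : en x ^ 2 ≤ C₁ * en u * en x := by
      rw [en_sq]; calc x ⬝ᵥ x ≤ en u * (C₁ * en x) := h1 ▸ h2
        _ = C₁ * en u * en x := by ring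
    rcases (en_nonneg x).eq_or_lt.imp Eq.symm id with h | h
    · rw [h]; exact mul_nonneg hC1.le (en_nonneg u)
    · nlinarith [h3]
  -- contraction bounds for G and Gᵀ
  have hID : S⁻¹ * F * S⁻¹ = 1 + Nt := by
    rw [← hF, Matrix.mul_add, Matrix.add_mul]
    congr 1
    rw [← hSm, ← Matrix.mul_assoc, hSi, Matrix.one_mul, hSi']
  have hIDT : S⁻¹ * Fᵀ * S⁻¹ = 1 - Nt := by
    rw [← hFT, Matrix.mul_sub, Matrix.sub_mul]
    congr 1
    rw [← hSm, ← Matrix.mul_assoc, hSi, Matrix.one_mul, hSi']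
  have hGc : ∀ w, en (G *ᵥ w) ≤ en w := by
    intro w
    refine en_contraction hNtskew ?_ w
    rw [← hID, hG_def]
    simp only [Matrix.mul_assoc]
    rw [cancel_left hSi, cancel_left hFi, hSi]
  have hGTc : ∀ w, en (Gᵀ *ᵥ w) ≤ en w := by
    intro w
    have hZ : (-Nt)ᵀ = -(-Nt) := by rw [transpose_neg, hNtskew, neg_neg]
    refine en_contraction hZ ?_ w
    have hGT : Gᵀ = S * (F⁻¹)ᵀ * S := by
      rw [hG_def]; simp [transpose_mul, hSs, Matrix.mul_assoc]
    rw [hGT, (sub_eq_add_neg (1 : Matrix (Fin n) (Fin n) ℝ) Nt).symm, ← hIDT]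
    simp only [Matrix.mul_assoc]
    rw [cancel_left hSi, cancel_left hFti, hSi]
  -- key matrix identity
  have hFti2 : F⁻¹ᵀ * Fᵀ = 1 := by rw [← transpose_mul, hFi, transpose_one]
  have hGT : Gᵀ = S * F⁻¹ᵀ * S := by
    rw [hG_def]; simp [transpose_mul, hSs, Matrix.mul_assoc]
  have hBtTeq : Btᵀ = S⁻¹ * (Bᵀ * R⁻¹) := by
    rw [hBt_def]; simp [transpose_mul, hSit, hRit, Matrix.mul_assoc]
  have hM1 : H1 * F⁻¹ = 1 - N * F⁻¹ := by
    have h : H1 * F⁻¹ + N * F⁻¹ = 1 := by rw [← Matrix.add_mul, hF, hFi]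
    exact eq_sub_of_add_eq h
  have hM2 : F⁻¹ᵀ * H1 = 1 + F⁻¹ᵀ * N := by
    have h : F⁻¹ᵀ * H1 - F⁻¹ᵀ * N = 1 := by rw [← Matrix.mul_sub, hFT, hFti2]
    exact eq_add_of_sub_eq h
  have hM1' : ∀ X : Matrix (Fin n) (Fin n) ℝ, H1 * (F⁻¹ * X) = X - N * (F⁻¹ * X) := by
    intro X
    rw [← Matrix.mul_assoc, hM1, Matrix.sub_mul, Matrix.one_mul, Matrix.mul_assoc]
  have hM2' : ∀ X : Matrix (Fin n) (Fin n) ℝ, F⁻¹ᵀ * (H1 * X) = X + F⁻¹ᵀ * (N * X) := by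
    intro X
    rw [← Matrix.mul_assoc, hM2, Matrix.add_mul, Matrix.one_mul, Matrix.mul_assoc]
  have hMkey : S⁻¹ * (H1 * F⁻¹ * Bᵀ * H2⁻¹ * B - Bᵀ * H2⁻¹ * B * F⁻¹ᵀ * H1) * S⁻¹
      = -(Nt * (G * (Btᵀ * Bt))) - Btᵀ * (Bt * (Gᵀ * Nt)) := by
    rw [hBtTeq, hGT, hNt_def, hG_def, hBt_def, hH2inv]
    simp only [Matrix.mul_assoc, Matrix.mul_sub, Matrix.sub_mul]
    simp only [hM1', hM2']
    simp only [Matrix.mul_sub, Matrix.sub_mul, Matrix.mul_add, Matrix.add_mul,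
      Matrix.one_mul, Matrix.mul_one, Matrix.mul_assoc,
      cancel_left hSi, cancel_left hSi', cancel_left hRi, cancel_left hRi',
      cancel_left hFi, cancel_left hFi', cancel_left hFti, cancel_left hFti2]
    abel
  -- conclusion
  refine wnorm_le_of_forall hH1pd (by positivity) ?_
  intro v
  rw [hv1i, hv1]
  have hstep : S⁻¹ *ᵥ ((H1 * F⁻¹ * Bᵀ * H2⁻¹ * B - Bᵀ * H2⁻¹ * B * F⁻¹ᵀ * H1) *ᵥ v)
      = (-(Nt * (G * (Btᵀ * Bt))) - Btᵀ * (Bt * (Gᵀ * Nt))) *ᵥ (S *ᵥ v) := by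
    have hmm : S⁻¹ * (H1 * F⁻¹ * Bᵀ * H2⁻¹ * B - Bᵀ * H2⁻¹ * B * F⁻¹ᵀ * H1)
        = (-(Nt * (G * (Btᵀ * Bt))) - Btᵀ * (Bt * (Gᵀ * Nt))) * S := by
      calc S⁻¹ * (H1 * F⁻¹ * Bᵀ * H2⁻¹ * B - Bᵀ * H2⁻¹ * B * F⁻¹ᵀ * H1)
          = S⁻¹ * (H1 * F⁻¹ * Bᵀ * H2⁻¹ * B - Bᵀ * H2⁻¹ * B * F⁻¹ᵀ * H1) * (S⁻¹ * S) := by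
            rw [hSi, Matrix.mul_one]
        _ = S⁻¹ * (H1 * F⁻¹ * Bᵀ * H2⁻¹ * B - Bᵀ * H2⁻¹ * B * F⁻¹ᵀ * H1) * S⁻¹ * S := by
            rw [Matrix.mul_assoc (S⁻¹ * (H1 * F⁻¹ * Bᵀ * H2⁻¹ * B - Bᵀ * H2⁻¹ * B * F⁻¹ᵀ * H1))]
        _ = (-(Nt * (G * (Btᵀ * Bt))) - Btᵀ * (Bt * (Gᵀ * Nt))) * S := by rw [hMkey]
    rw [mulVec_mulVec, mulVec_mulVec, hmm]
  rw [hstep]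
  set w := S *ᵥ v with hw
  have e1 : (-(Nt * (G * (Btᵀ * Bt))) - Btᵀ * (Bt * (Gᵀ * Nt))) *ᵥ w
      = -((Nt * (G * (Btᵀ * Bt))) *ᵥ w + (Btᵀ * (Bt * (Gᵀ * Nt))) *ᵥ w) := by
    rw [sub_mulVec, neg_mulVec]
    abel
  rw [e1, en_neg]
  have t1 : en ((Nt * (G * (Btᵀ * Bt))) *ᵥ w) ≤ η * (C₁ * (C₁ * en w)) := by
    rw [← mulVec_mulVec w Nt (G * (Btᵀ * Bt)), ← mulVec_mulVec w G (Btᵀ * Bt),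
      ← mulVec_mulVec w Btᵀ Bt]
    calc en (Nt *ᵥ (G *ᵥ (Btᵀ *ᵥ (Bt *ᵥ w)))) ≤ η * en (G *ᵥ (Btᵀ *ᵥ (Bt *ᵥ w))) := hNpt _
      _ ≤ η * en (Btᵀ *ᵥ (Bt *ᵥ w)) := mul_le_mul_of_nonneg_left (hGc _) hη.le
      _ ≤ η * (C₁ * en (Bt *ᵥ w)) := mul_le_mul_of_nonneg_left (hBtT _) hη.le
      _ ≤ η * (C₁ * (C₁ * en w)) :=
          mul_le_mul_of_nonneg_left
            (mul_le_mul_of_nonneg_left (hBpt _) hC1.le) hη.le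
  have t2 : en ((Btᵀ * (Bt * (Gᵀ * Nt))) *ᵥ w) ≤ C₁ * (C₁ * (η * en w)) := by
    rw [← mulVec_mulVec w Btᵀ (Bt * (Gᵀ * Nt)), ← mulVec_mulVec w Bt (Gᵀ * Nt),
      ← mulVec_mulVec w Gᵀ Nt]
    calc en (Btᵀ *ᵥ (Bt *ᵥ (Gᵀ *ᵥ (Nt *ᵥ w))))
        ≤ C₁ * en (Bt *ᵥ (Gᵀ *ᵥ (Nt *ᵥ w))) := hBtT _
      _ ≤ C₁ * (C₁ * en (Gᵀ *ᵥ (Nt *ᵥ w))) :=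
          mul_le_mul_of_nonneg_left (hBpt _) hC1.le
      _ ≤ C₁ * (C₁ * en (Nt *ᵥ w)) :=
          mul_le_mul_of_nonneg_left
            (mul_le_mul_of_nonneg_left (hGTc _) hC1.le) hC1.le
      _ ≤ C₁ * (C₁ * (η * en w)) :=
          mul_le_mul_of_nonneg_left
            (mul_le_mul_of_nonneg_left (hNpt _) hC1.le) hC1.le
  calc en ((Nt * (G * (Btᵀ * Bt))) *ᵥ w + (Btᵀ * (Bt * (Gᵀ * Nt))) *ᵥ w)
      ≤ en ((Nt * (G * (Btᵀ * Bt))) *ᵥ w) + en ((Btᵀ * (Bt * (Gᵀ * Nt))) *ᵥ w) := en_add_le _ _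
    _ ≤ η * (C₁ * (C₁ * en w)) + C₁ * (C₁ * (η * en w)) := add_le_add t1 t2
    _ = 2 * C₁ ^ 2 * η * en w := by ring
end
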